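/- arXiv:1602.03728 — 2 statements merged into one kernel-verified Lean document; each statement's English description precedes it below -/
import Mathlib

section
/- For any two first-order differential operators X, Y and any differential operator Z, the white-multiplication associators satisfy the left-symmetry identity (X, Y, Z)^∘ = (Y, X, Z)^∘. -/
open Finsupp

/-- The space of linear differential operators in `n` variables (with polynomial
coefficients over `ℂ`): a formal finite sum `Σ_α u_α ∂^α`. -/
abbrev Diff (n : ℕ) := (Fin n →₀ ℕ) →₀ MvPolynomial (Fin n) ℂ

/-- The operator `∂^α = ∂₁^{α₁} ⋯ ∂ₙ^{αₙ}` acting on coefficient functions. -/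
noncomputable def Dop {n : ℕ} (α : Fin n →₀ ℕ) :
    Module.End ℂ (MvPolynomial (Fin n) ℂ) :=
  (List.ofFn fun i : Fin n => ((MvPolynomial.pderiv i).toLinearMap) ^ (α i)).prod

/-- White multiplication: `(u ∂^α) ∘ (v ∂^β) = u ∂^α(v) ∂^β`, extended bilinearly. -/
noncomputable def white {n : ℕ} (X Y : Diff n) : Diff n :=
  X.sum fun α u => Y.sum fun β v => Finsupp.single β (u * Dop α v)

/-- Black multiplication: `(u ∂^α) • (v ∂^β) = u v ∂^{α+β}`, extended bilinearly. -/
noncomputable def black {n : ℕ} (X Y : Diff n) : Diff n :=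
  X.sum fun α u => Y.sum fun β v => Finsupp.single (α + β) (u * v)

/-- Composition of differential operators:
`(u ∂^α) ⋄ (v ∂^β) = Σ_{γ ≤ α} binom(α,γ) u ∂^γ(v) ∂^{α+β-γ}`, extended bilinearly. -/
noncomputable def diam {n : ℕ} (X Y : Diff n) : Diff n :=
  X.sum fun α u => Y.sum fun β v =>
    ∑ γ ∈ Finset.Iic α,
      Finsupp.single (α + β - γ) (((∏ i, ((α i).choose (γ i)) : ℕ) : ℂ) • (u * Dop γ v))

/-- A differential operator is of first order (a vector field) if it has the
form `Σ_i u_i ∂_i`, i.e. every multi-index in its support has total degree 1. -/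
def IsVect {n : ℕ} (X : Diff n) : Prop :=
  ∀ α ∈ X.support, (α.sum fun _ k => k) = 1

/-- The identity differential operator `1·∂^0`. -/
noncomputable def unitD {n : ℕ} : Diff n := Finsupp.single 0 1

/-- Composition (`⋄`-)power `L^m = L ⋄ ⋯ ⋄ L`. -/
noncomputable def dpow {n : ℕ} (L : Diff n) : ℕ → Diff n
  | 0 => unitD
  | m + 1 => diam L (dpow L m)

/-- Black power `X^{•k} = X • ⋯ • X`. -/
noncomputable def bpow {n : ℕ} (X : Diff n) : ℕ → Diff n
  | 0 => unitD
  | k + 1 => black X (bpow X k)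

lemma pderiv_comm' {n : ℕ} (i j : Fin n) (p : MvPolynomial (Fin n) ℂ) :
    MvPolynomial.pderiv i (MvPolynomial.pderiv j p) =
      MvPolynomial.pderiv j (MvPolynomial.pderiv i p) := by
  induction p using MvPolynomial.induction_on with
  | C a => simp
  | add p q hp hq => simp [hp, hq]
  | mul_X p k hp =>
    have h1 : ∀ a b : Fin n, (MvPolynomial.pderiv a) ((Pi.single b 1 : Fin n → MvPolynomial (Fin n) ℂ) k) = 0 := by
      intro a b
      rcases eq_or_ne k b with h | h
      · subst h; simp
      · simp [Pi.single_apply, Ne.symm h]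
    simp [MvPolynomial.pderiv_mul, hp, h1]
    ring

lemma commute_pderiv {n : ℕ} (i j : Fin n) :
    Commute ((MvPolynomial.pderiv i).toLinearMap : Module.End ℂ (MvPolynomial (Fin n) ℂ))
      (MvPolynomial.pderiv j).toLinearMap := by
  apply LinearMap.ext; intro p
  exact pderiv_comm' i j p

lemma commute_Dop {n : ℕ} (α β : Fin n →₀ ℕ) : Commute (Dop α) (Dop β) := by
  unfold Dop
  apply Commute.list_prod_right
  intro x hx
  apply Commute.list_prod_left
  intro y hy
  simp only [List.mem_ofFn] at hx hy
  obtain ⟨i, rfl⟩ := hx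
  obtain ⟨j, rfl⟩ := hy
  exact ((commute_pderiv j i).pow_pow _ _)

lemma prod_ofFn_ite {M : Type*} [Monoid M] :
    ∀ {n : ℕ} (i : Fin n) (f : Fin n → M),
      (List.ofFn fun j => if j = i then f j else 1).prod = f i := by
  intro n
  induction n with
  | zero => exact fun i => i.elim0
  | succ m ih =>
    intro i f
    rw [List.ofFn_succ]
    induction i using Fin.cases with
    | zero =>
      have htail : (List.ofFn fun j : Fin m => if (j.succ : Fin (m+1)) = 0 then f j.succ else 1).prod = 1 := by
        apply List.prod_eq_one
        intro x hx
        simp only [List.mem_ofFn] at hx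
        obtain ⟨j, rfl⟩ := hx
        simp [Fin.succ_ne_zero]
      simp only [List.prod_cons, Fin.cons_zero]
      simp [htail]
    | succ k =>
      simp only [List.prod_cons, if_neg (Fin.succ_ne_zero k).symm, one_mul]
      have := ih k (fun j => f j.succ)
      simp only [Fin.succ_inj] at *
      convert this using 3

lemma Dop_single_one {n : ℕ} (i : Fin n) :
    Dop (Finsupp.single i 1) = (MvPolynomial.pderiv i).toLinearMap := by
  unfold Dop
  have h : (fun j : Fin n =>
      ((MvPolynomial.pderiv j).toLinearMap : Module.End ℂ (MvPolynomial (Fin n) ℂ)) ^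
        ((Finsupp.single i 1 : Fin n →₀ ℕ) j)) =
      fun j => if j = i then (MvPolynomial.pderiv j).toLinearMap else 1 := by
    funext j
    rcases eq_or_ne j i with hji | hji
    · subst hji; simp
    · simp [Finsupp.single_apply, Ne.symm hji, hji]
  rw [h, prod_ofFn_ite]

lemma exists_single_of_sum_eq_one {n : ℕ} (α : Fin n →₀ ℕ)
    (h : (α.sum fun _ k => k) = 1) : ∃ i, α = Finsupp.single i 1 := by
  have hsup : α.support.Nonempty := by
    by_contra hc
    rw [Finset.not_nonempty_iff_eq_empty] at hc
    rw [Finsupp.sum, hc] at h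
    simp at h
  obtain ⟨i, hi⟩ := hsup
  have hsum : ∑ a ∈ α.support, α a = 1 := h
  have hle : α i ≤ 1 := by
    rw [← hsum]
    exact Finset.single_le_sum (fun a _ => Nat.zero_le _) hi
  have hge : 1 ≤ α i := Nat.one_le_iff_ne_zero.mpr (Finsupp.mem_support_iff.mp hi)
  have hαi : α i = 1 := le_antisymm hle hge
  refine ⟨i, Finsupp.eq_single_iff.mpr ⟨?_, hαi⟩⟩
  intro j hj
  simp only [Finset.mem_singleton]
  by_contra hji
  have hsub : ({i, j} : Finset (Fin n)) ⊆ α.support := by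
    intro x hx
    simp only [Finset.mem_insert, Finset.mem_singleton] at hx
    rcases hx with rfl | rfl
    · exact hi
    · exact hj
  have h2 : α i + α j ≤ 1 := by
    rw [← hsum, ← Finset.sum_pair (Ne.symm hji)]
    exact Finset.sum_le_sum_of_subset hsub
  have := Nat.one_le_iff_ne_zero.mpr (Finsupp.mem_support_iff.mp hj)
  omega

lemma Dop_leibniz {n : ℕ} (α : Fin n →₀ ℕ) (h : (α.sum fun _ k => k) = 1)
    (p q : MvPolynomial (Fin n) ℂ) :
    Dop α (p * q) = Dop α p * q + p * Dop α q := by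
  obtain ⟨i, rfl⟩ := exists_single_of_sum_eq_one α h
  rw [Dop_single_one]
  exact MvPolynomial.pderiv_mul

lemma white_single_left {n : ℕ} (α : Fin n →₀ ℕ) (u : MvPolynomial (Fin n) ℂ)
    (Y : Diff n) :
    white (Finsupp.single α u) Y = Y.sum fun β v => Finsupp.single β (u * Dop α v) := by
  unfold white
  rw [Finsupp.sum_single_index]
  simp

lemma white_single_single {n : ℕ} (α β : Fin n →₀ ℕ) (u v : MvPolynomial (Fin n) ℂ) :
    white (Finsupp.single α u) (Finsupp.single β v) = Finsupp.single β (u * Dop α v) := by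
  rw [white_single_left, Finsupp.sum_single_index]
  simp

lemma white_zero_left {n : ℕ} (Y : Diff n) : white 0 Y = 0 := by simp [white]

lemma white_zero_right {n : ℕ} (X : Diff n) : white X 0 = 0 := by simp [white]

lemma white_add_left {n : ℕ} (X1 X2 Y : Diff n) :
    white (X1 + X2) Y = white X1 Y + white X2 Y := by
  unfold white
  apply Finsupp.sum_add_index
  · intro a _
    simp
  · intro a _ b1 b2
    simp [add_mul, Finsupp.single_add, Finsupp.sum_add]

lemma white_add_right {n : ℕ} (X Y1 Y2 : Diff n) :
    white X (Y1 + Y2) = white X Y1 + white X Y2 := by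
  unfold white
  rw [← Finsupp.sum_add]
  apply Finsupp.sum_congr
  intro α _
  apply Finsupp.sum_add_index
  · intro a _
    simp
  · intro a _ b1 b2
    simp [mul_add, Finsupp.single_add]

noncomputable def whiteHom {n : ℕ} (X : Diff n) : Diff n →+ Diff n where
  toFun := white X
  map_zero' := white_zero_right X
  map_add' := white_add_right X

lemma Dop_comm {n : ℕ} (α β : Fin n →₀ ℕ) (w : MvPolynomial (Fin n) ℂ) :
    Dop α (Dop β w) = Dop β (Dop α w) := by
  have h := commute_Dop α β
  have := LinearMap.congr_fun (h : Dop α * Dop β = Dop β * Dop α) w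
  simpa [Module.End.mul_apply] using this

lemma key_single {n : ℕ} (α β : Fin n →₀ ℕ) (hα : (α.sum fun _ k => k) = 1)
    (u v : MvPolynomial (Fin n) ℂ) (Z : Diff n) :
    white (Finsupp.single α u) (white (Finsupp.single β v) Z) -
      white (white (Finsupp.single α u) (Finsupp.single β v)) Z =
    Z.sum fun γ w => Finsupp.single γ (u * v * Dop α (Dop β w)) := by
  rw [white_single_single, white_single_left β v Z]
  rw [show white (Finsupp.single α u)
        (Z.sum fun γ w => Finsupp.single γ (v * Dop β w)) =
      Z.sum fun γ w => white (Finsupp.single α u) (Finsupp.single γ (v * Dop β w)) from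
    map_finsuppSum (whiteHom (Finsupp.single α u)) Z _]
  simp only [white_single_single]
  rw [white_single_left β (u * Dop α v) Z]
  rw [Finsupp.sum, Finsupp.sum, Finsupp.sum, ← Finset.sum_sub_distrib]
  apply Finset.sum_congr rfl
  intro γ _
  rw [← Finsupp.single_sub]
  congr 1
  rw [Dop_leibniz α hα]
  ring

noncomputable def assocHom {n : ℕ} (Y Z : Diff n) : Diff n →+ Diff n where
  toFun X := white X (white Y Z) - white (white X Y) Z
  map_zero' := by simp [white_zero_left]
  map_add' X1 X2 := by
    simp only [white_add_left]
    abel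

noncomputable def assocHom2 {n : ℕ} (α : Fin n →₀ ℕ) (u : MvPolynomial (Fin n) ℂ)
    (Z : Diff n) : Diff n →+ Diff n where
  toFun Y := white (Finsupp.single α u) (white Y Z) -
    white (white (Finsupp.single α u) Y) Z
  map_zero' := by simp [white_zero_left, white_zero_right]
  map_add' Y1 Y2 := by
    simp only [white_add_left, white_add_right]
    abel

lemma assoc_expand {n : ℕ} (X Y Z : Diff n) :
    white X (white Y Z) - white (white X Y) Z =
      ∑ α ∈ X.support, ∑ β ∈ Y.support,
        (white (Finsupp.single α (X α)) (white (Finsupp.single β (Y β)) Z) -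
          white (white (Finsupp.single α (X α)) (Finsupp.single β (Y β))) Z) := by
  have h1 : assocHom Y Z X = ∑ α ∈ X.support, assocHom Y Z (Finsupp.single α (X α)) := by
    conv_lhs => rw [← Finsupp.sum_single X]
    exact map_finsuppSum _ _ _
  have h2 : ∀ (α : Fin n →₀ ℕ) (u : MvPolynomial (Fin n) ℂ),
      assocHom2 α u Z Y = ∑ β ∈ Y.support, assocHom2 α u Z (Finsupp.single β (Y β)) := by
    intro α u
    conv_lhs => rw [← Finsupp.sum_single Y]
    exact map_finsuppSum _ _ _
  show assocHom Y Z X = _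
  rw [h1]
  apply Finset.sum_congr rfl
  intro α _
  show assocHom2 α (X α) Z Y = _
  rw [h2]
  rfl

/-- for vector fields `X, Y` and any operator `Z`, the white
associator is left-symmetric: `(X,Y,Z)^∘ = (Y,X,Z)^∘`. -/
theorem white_associator_left_symm {n : ℕ} (X Y Z : Diff n)
    (hX : IsVect X) (hY : IsVect Y) :
    white X (white Y Z) - white (white X Y) Z =
      white Y (white X Z) - white (white Y X) Z := by
  rw [assoc_expand X Y Z, assoc_expand Y X Z, Finset.sum_comm]
  apply Finset.sum_congr rfl
  intro β hβ
  apply Finset.sum_congr rfl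
  intro α hα
  rw [key_single α β (hX α hα) (X α) (Y β) Z, key_single β α (hY β hβ) (Y β) (X α) Z]
  apply Finsupp.sum_congr
  intro γ _
  rw [Dop_comm, mul_comm (X α) (Y β)]
end

section
/- Logarithmic Lagrange inversion formula: for f ∈ ℂ[[x]] with f(0) = 0 and f'(0) ≠ 0, the compositional inverse satisfies f^{⟨−1⟩}(x) = ln( Σ_{m≥0} c_m x^m/m! ), where c_m = [((1/f'(x))·d/dx)^m (e^x)] evaluated at x = 0, and ln denotes the formal power series logarithm. -/
open PowerSeries

/-- Composition `(g ∘ f)(x) = g(f(x))` of formal power series (meaningful when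
`f(0) = 0`): the `n`-th coefficient is `Σ_{k=0}^{n} g_k · [x^n] f^k`. -/
noncomputable def pcomp (g f : PowerSeries ℂ) : PowerSeries ℂ :=
  PowerSeries.mk fun n =>
    ∑ k ∈ Finset.range (n + 1), (coeff k g) * coeff n (f ^ k)

/-- The operator `h ↦ (1/f'(x))·dh/dx` on formal power series. -/
noncomputable def lagOp (f : PowerSeries ℂ) (h : PowerSeries ℂ) : PowerSeries ℂ :=
  (derivativeFun f)⁻¹ * derivativeFun h

/-- The formal logarithm `ln(1 + u) = Σ_{k≥1} (-1)^{k-1} u^k / k` (for `u(0) = 0`);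
the `k = 0` term vanishes since `(0 : ℂ)⁻¹ = 0`. -/
noncomputable def plog (u : PowerSeries ℂ) : PowerSeries ℂ :=
  PowerSeries.mk fun n =>
    ∑ k ∈ Finset.range (n + 1), (-1 : ℂ) ^ (k - 1) * (k : ℂ)⁻¹ * coeff n (u ^ k)

/-- The formal power series `e^x = Σ_{n≥0} xⁿ/n!`. -/
noncomputable def expS : PowerSeries ℂ := PowerSeries.mk fun n => (n.factorial : ℂ)⁻¹

set_option linter.unusedVariables false

open Finset

lemma coeff_derivativeFun' (f : PowerSeries ℂ) (n : ℕ) :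
    coeff n (derivativeFun f) = coeff (n + 1) f * (n + 1) := coeff_derivative f n

lemma derivativeFun_C' {r : ℂ} : derivativeFun (PowerSeries.C r) = 0 := derivative_C

lemma coeff_pow_zero_of_lt {f : PowerSeries ℂ} (hf0 : constantCoeff f = 0)
    {n k : ℕ} (h : n < k) : coeff n (f ^ k) = 0 := by
  obtain ⟨u, hu⟩ := (PowerSeries.X_dvd_iff.mpr hf0)
  have : (X : PowerSeries ℂ) ^ k ∣ f ^ k := pow_dvd_pow_of_dvd ⟨u, hu⟩ k
  obtain ⟨v, hv⟩ := this
  rw [hv, PowerSeries.coeff_X_pow_mul']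
  simp [Nat.not_le_of_lt h]

lemma coeff_eval₂ {f : PowerSeries ℂ} (hf0 : constantCoeff f = 0)
    (p : Polynomial ℂ) (n : ℕ) :
    coeff n (Polynomial.eval₂ (PowerSeries.C) f p) =
      ∑ k ∈ range (n + 1), p.coeff k * coeff n (f ^ k) := by
  rw [Polynomial.eval₂_eq_sum, Polynomial.sum, map_sum]
  have h1 : ∑ k ∈ p.support, coeff n (PowerSeries.C (p.coeff k) * f ^ k)
      = ∑ k ∈ p.support ∪ range (n+1), p.coeff k * coeff n (f ^ k) := by
    apply Finset.sum_subset_zero_on_sdiff Finset.subset_union_left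
    · intro k hk
      simp only [Finset.mem_sdiff, Polynomial.mem_support_iff, not_not] at hk
      rw [hk.2, zero_mul]
    · intro k _; rw [PowerSeries.coeff_C_mul]
  have h2 : ∑ k ∈ range (n+1), p.coeff k * coeff n (f ^ k)
      = ∑ k ∈ p.support ∪ range (n+1), p.coeff k * coeff n (f ^ k) := by
    apply Finset.sum_subset_zero_on_sdiff Finset.subset_union_right
    · intro k hk
      simp only [Finset.mem_sdiff, Finset.mem_range, not_lt] at hk
      rw [coeff_pow_zero_of_lt hf0 hk.2, mul_zero]
    · intro k _; rfl
  rw [h1, h2]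

lemma coeff_pcomp (g f : PowerSeries ℂ) (n : ℕ) :
    coeff n (pcomp g f) = ∑ k ∈ range (n + 1), (coeff k g) * coeff n (f ^ k) := by
  simp [pcomp]

lemma coeff_pcomp_eq_eval₂ {f : PowerSeries ℂ} (hf0 : constantCoeff f = 0)
    {g : PowerSeries ℂ} {p : Polynomial ℂ} {n : ℕ}
    (hp : ∀ k ≤ n, p.coeff k = coeff k g) :
    coeff n (pcomp g f) = coeff n (Polynomial.eval₂ (PowerSeries.C) f p) := by
  rw [coeff_pcomp, coeff_eval₂ hf0]
  apply Finset.sum_congr rfl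
  intro k hk
  rw [hp k (Nat.lt_succ_iff.mp (Finset.mem_range.mp hk))]

lemma trunc_coeff_agree (g : PowerSeries ℂ) (n : ℕ) :
    ∀ k ≤ n, (trunc (n+1) g).coeff k = coeff k g := by
  intro k hk
  rw [PowerSeries.coeff_trunc, if_pos (Nat.lt_succ_of_le hk)]

lemma pcomp_mul {f : PowerSeries ℂ} (hf0 : constantCoeff f = 0) (g h : PowerSeries ℂ) :
    pcomp (g * h) f = pcomp g f * pcomp h f := by
  ext n
  have key : coeff n (pcomp (g*h) f)
      = coeff n (Polynomial.eval₂ (PowerSeries.C) f (trunc (n+1) g * trunc (n+1) h)) := by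
    apply coeff_pcomp_eq_eval₂ hf0
    intro k hk
    rw [Polynomial.coeff_mul, PowerSeries.coeff_mul]
    apply Finset.sum_congr rfl
    intro x hx
    rw [Finset.HasAntidiagonal.mem_antidiagonal] at hx
    rw [trunc_coeff_agree g n x.1 (le_trans (le_trans (Nat.le.intro hx) (le_refl k)) hk),
        trunc_coeff_agree h n x.2 (le_trans (le_trans (Nat.le.intro (by rw [add_comm]; exact hx)) (le_refl k)) hk)]
  rw [key, Polynomial.eval₂_mul, PowerSeries.coeff_mul, PowerSeries.coeff_mul]
  apply Finset.sum_congr rfl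
  intro x hx
  rw [Finset.HasAntidiagonal.mem_antidiagonal] at hx
  rw [coeff_pcomp_eq_eval₂ hf0 (p := trunc (n+1) g) (fun k hk => trunc_coeff_agree g n k (le_trans hk (Nat.le.intro hx))),
      coeff_pcomp_eq_eval₂ hf0 (p := trunc (n+1) h) (fun k hk => trunc_coeff_agree h n k (le_trans hk (Nat.le.intro (by rw [add_comm]; exact hx))))]

lemma pcomp_add (g h f : PowerSeries ℂ) : pcomp (g + h) f = pcomp g f + pcomp h f := by
  ext n
  simp [coeff_pcomp, add_mul, Finset.sum_add_distrib]

lemma pcomp_one (f : PowerSeries ℂ) : pcomp 1 f = 1 := by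
  ext n
  rw [coeff_pcomp]
  rw [Finset.sum_eq_single 0]
  · simp
  · intro k _ hk
    rw [PowerSeries.coeff_one, if_neg hk, zero_mul]
  · simp

lemma pcomp_X {f : PowerSeries ℂ} (hf0 : constantCoeff f = 0) : pcomp X f = f := by
  ext n
  rw [coeff_pcomp]
  rw [Finset.sum_eq_single 1]
  · simp
  · intro k hk hk1
    rw [PowerSeries.coeff_X, if_neg hk1, zero_mul]
  · intro h
    simp only [Finset.mem_range, not_lt, Nat.lt_one_iff] at h
    have hn : n = 0 := Nat.le_zero.mp (Nat.lt_succ_iff.mp h)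
    subst hn
    simp [hf0]

lemma constantCoeff_pcomp (g f : PowerSeries ℂ) :
    constantCoeff (pcomp g f) = constantCoeff g := by
  have := coeff_pcomp g f 0
  simp only [coeff_zero_eq_constantCoeff] at this ⊢
  rw [this]
  simp

lemma derivativeFun_pow (f : PowerSeries ℂ) (n : ℕ) :
    derivativeFun (f ^ n) = (n : PowerSeries ℂ) * f ^ (n - 1) * derivativeFun f := by
  induction n with
  | zero => simp [derivativeFun_one]
  | succ m ih =>
    rw [pow_succ, derivativeFun_mul, ih]
    rcases Nat.eq_zero_or_pos m with hm | hm
    · subst hm; simp [derivativeFun_one]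
    · have h1 : m - 1 + 1 = m := Nat.succ_pred_eq_of_pos hm
      have h2 : (m + 1 : ℕ) - 1 = m := rfl
      rw [h2, smul_eq_mul, smul_eq_mul]
      have hfm : f * f ^ (m - 1) = f ^ m := by rw [← pow_succ', h1]
      have h3 : f * ((m : PowerSeries ℂ) * f ^ (m-1) * f.derivativeFun)
          = (m : PowerSeries ℂ) * f ^ m * f.derivativeFun := by rw [← hfm]; ring
      rw [h3]
      push_cast
      ring

lemma derivativeFun_eval₂ (f : PowerSeries ℂ) (p : Polynomial ℂ) :
    derivativeFun (Polynomial.eval₂ (PowerSeries.C) f p)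
      = Polynomial.eval₂ (PowerSeries.C) f (Polynomial.derivative p) * derivativeFun f := by
  induction p using Polynomial.induction_on' with
  | add p q hp hq =>
    rw [Polynomial.eval₂_add, derivativeFun_add, hp, hq, map_add, Polynomial.eval₂_add, add_mul]
  | monomial n a =>
    rw [Polynomial.eval₂_monomial, derivativeFun_mul, derivativeFun_C', smul_zero, add_zero,
      smul_eq_mul, derivativeFun_pow, Polynomial.derivative_monomial, Polynomial.eval₂_monomial]
    rw [map_mul, map_natCast]
    ring

lemma pcomp_derivativeFun {f : PowerSeries ℂ} (hf0 : constantCoeff f = 0) (g : PowerSeries ℂ) :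
    derivativeFun (pcomp g f) = pcomp (derivativeFun g) f * derivativeFun f := by
  ext n
  have hder : ∀ k ≤ n, (Polynomial.derivative (trunc (n+2) g)).coeff k
      = coeff k (derivativeFun g) := by
    intro k hk
    rw [Polynomial.coeff_derivative, PowerSeries.coeff_trunc,
      if_pos (by omega : k + 1 < n + 2), coeff_derivativeFun']
  have lhs : coeff n (derivativeFun (pcomp g f))
      = coeff n (Polynomial.eval₂ (PowerSeries.C) f (Polynomial.derivative (trunc (n+2) g))
          * derivativeFun f) := by
    rw [coeff_derivativeFun',
      coeff_pcomp_eq_eval₂ hf0 (p := trunc (n+2) g)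
        (fun k hk => by rw [PowerSeries.coeff_trunc, if_pos (by omega : k < n + 2)]),
      ← coeff_derivativeFun', derivativeFun_eval₂]
  rw [lhs, PowerSeries.coeff_mul, PowerSeries.coeff_mul]
  apply Finset.sum_congr rfl
  intro x hx
  rw [Finset.HasAntidiagonal.mem_antidiagonal] at hx
  rw [coeff_pcomp_eq_eval₂ hf0 (p := Polynomial.derivative (trunc (n+2) g))
      (fun k hk => hder k (le_trans hk (Nat.le.intro hx)))]

lemma derivativeFun_X' : derivativeFun (X : PowerSeries ℂ) = 1 := by
  ext n
  simp only [coeff_derivativeFun', PowerSeries.coeff_one]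
  rw [PowerSeries.coeff_X]
  rcases Nat.eq_zero_or_pos n with h | h
  · subst h; simp
  · rw [if_neg (by omega), if_neg (by omega), zero_mul]

lemma constantCoeff_derivativeFun (f : PowerSeries ℂ) :
    constantCoeff (derivativeFun f) = coeff 1 f := by
  rw [← coeff_zero_eq_constantCoeff, coeff_derivativeFun']
  simp

lemma derivativeFun_sub (a b : PowerSeries ℂ) :
    derivativeFun (a - b) = derivativeFun a - derivativeFun b := by
  have h := derivativeFun_add (a - b) b
  rw [sub_add_cancel] at h
  rw [h]; ring

section main
variable {f g : PowerSeries ℂ}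
  (hf0 : constantCoeff f = 0) (hf1 : coeff 1 f ≠ 0)
  (hg0 : constantCoeff g = 0) (hgf : pcomp f g = (PowerSeries.X : PowerSeries ℂ))

include hf1 hg0 hgf in
lemma pcomp_lagOp (A : PowerSeries ℂ) :
    pcomp (lagOp f A) g = derivativeFun (pcomp A g) := by
  have hchain : pcomp (derivativeFun f) g * derivativeFun g = 1 := by
    rw [← pcomp_derivativeFun hg0 f, hgf, derivativeFun_X']
  have hcc : constantCoeff (pcomp (derivativeFun f) g) ≠ 0 := by
    rw [constantCoeff_pcomp, constantCoeff_derivativeFun]; exact hf1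
  have hccf : constantCoeff (derivativeFun f) ≠ 0 := by
    rw [constantCoeff_derivativeFun]; exact hf1
  have hne : pcomp (derivativeFun f) g ≠ 0 := by
    intro h; rw [h, map_zero] at hcc; exact hcc rfl
  have hinv : pcomp ((derivativeFun f)⁻¹) g = derivativeFun g := by
    apply mul_left_cancel₀ hne
    rw [hchain, ← pcomp_mul hg0, PowerSeries.mul_inv_cancel _ hccf, pcomp_one]
  rw [lagOp, pcomp_mul hg0, hinv, pcomp_derivativeFun hg0, mul_comm]

include hf1 hg0 hgf in
lemma pcomp_lagOp_iter (A : PowerSeries ℂ) (m : ℕ) :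
    pcomp ((lagOp f)^[m] A) g = derivativeFun^[m] (pcomp A g) := by
  induction m with
  | zero => rfl
  | succ k ih =>
    rw [Function.iterate_succ_apply', Function.iterate_succ_apply',
      pcomp_lagOp hf1 hg0 hgf, ih]

end main

lemma constantCoeff_iter_deriv (m : ℕ) (h : PowerSeries ℂ) :
    constantCoeff (derivativeFun^[m] h) = (m.factorial : ℂ) * coeff m h := by
  induction m generalizing h with
  | zero => simp
  | succ k ih =>
    rw [Function.iterate_succ_apply, ih, coeff_derivativeFun', Nat.factorial_succ]
    push_cast
    ring

lemma derivativeFun_expS : derivativeFun expS = expS := by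
  ext n
  rw [coeff_derivativeFun']
  simp only [expS, PowerSeries.coeff_mk]
  rw [Nat.factorial_succ]
  have h1 : ((n+1 : ℕ) : ℂ) ≠ 0 := Nat.cast_ne_zero.mpr (Nat.succ_ne_zero n)
  have h2 : ((n.factorial : ℕ) : ℂ) ≠ 0 := Nat.cast_ne_zero.mpr n.factorial_ne_zero
  push_cast
  field_simp

noncomputable def logS : PowerSeries ℂ :=
  PowerSeries.mk fun k => (-1 : ℂ) ^ (k - 1) * (k : ℂ)⁻¹

lemma plog_eq_pcomp (u : PowerSeries ℂ) : plog u = pcomp logS u := by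
  ext n
  simp [plog, pcomp, logS]

noncomputable def geomS : PowerSeries ℂ := PowerSeries.mk fun k => (-1 : ℂ) ^ k

lemma derivativeFun_logS : derivativeFun logS = geomS := by
  ext n
  rw [coeff_derivativeFun']
  simp only [logS, geomS, PowerSeries.coeff_mk, Nat.add_sub_cancel]
  have h1 : ((n+1 : ℕ) : ℂ) ≠ 0 := Nat.cast_ne_zero.mpr (Nat.succ_ne_zero n)
  push_cast
  field_simp

lemma one_add_X_mul_geomS : (1 + PowerSeries.X) * geomS = 1 := by
  ext n
  rw [add_mul, one_mul, map_add]
  rcases Nat.eq_zero_or_pos n with h | h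
  · subst h
    simp [geomS, PowerSeries.coeff_one]
  · obtain ⟨m, rfl⟩ := Nat.exists_eq_succ_of_ne_zero (Nat.pos_iff_ne_zero.mp h)
    rw [PowerSeries.coeff_succ_X_mul]
    simp [geomS, PowerSeries.coeff_one, pow_succ]

lemma eq_of_deriv {a b : PowerSeries ℂ} (h1 : derivativeFun a = derivativeFun b)
    (h2 : constantCoeff a = constantCoeff b) : a = b := by
  ext n
  cases n with
  | zero => simpa using h2
  | succ m =>
    have h3 : coeff m (derivativeFun a) = coeff m (derivativeFun b) := by rw [h1]
    rw [coeff_derivativeFun', coeff_derivativeFun'] at h3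
    have h4 : ((m : ℂ) + 1) ≠ 0 := by
      have : ((m+1 : ℕ) : ℂ) ≠ 0 := Nat.cast_ne_zero.mpr (Nat.succ_ne_zero m)
      push_cast at this; exact this
    exact mul_right_cancel₀ h4 h3


theorem log_lagrange (f g : PowerSeries ℂ)
    (hf0 : constantCoeff f = 0) (hf1 : coeff 1 f ≠ 0)
    (hg0 : constantCoeff g = 0) (hgf : pcomp f g = X) (hfg : pcomp g f = X) :
    g = plog ((PowerSeries.mk fun m =>
          (constantCoeff ((lagOp f)^[m] expS)) * (m.factorial : ℂ)⁻¹) - 1) := by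
  set E := pcomp expS g with hE
  have hmk : (PowerSeries.mk fun m =>
      (constantCoeff ((lagOp f)^[m] expS)) * (m.factorial : ℂ)⁻¹) = E := by
    ext m
    rw [PowerSeries.coeff_mk, ← constantCoeff_pcomp ((lagOp f)^[m] expS) g,
      pcomp_lagOp_iter hf1 hg0 hgf, constantCoeff_iter_deriv]
    have hfac : ((m.factorial : ℕ) : ℂ) ≠ 0 := Nat.cast_ne_zero.mpr m.factorial_ne_zero
    field_simp
    rfl
  rw [hmk]
  set u := E - 1 with hu
  have hE0 : constantCoeff E = 1 := by
    rw [hE, constantCoeff_pcomp, ← coeff_zero_eq_constantCoeff]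
    simp [expS]
  have hu0 : constantCoeff u = 0 := by rw [hu, map_sub, hE0, map_one, sub_self]
  have hEu : E = 1 + u := by rw [hu]; ring
  have hE' : derivativeFun E = E * derivativeFun g := by
    rw [hE, pcomp_derivativeFun hg0, derivativeFun_expS]
  have hu' : derivativeFun u = E * derivativeFun g := by
    rw [hu, derivativeFun_sub, derivativeFun_one, sub_zero, hE']
  have hGeom : pcomp geomS u * E = 1 := by
    have h1 : pcomp (1 + PowerSeries.X) u = E := by
      rw [pcomp_add, pcomp_one, pcomp_X hu0, hEu]
    rw [← h1, ← pcomp_mul hu0, mul_comm geomS, one_add_X_mul_geomS, pcomp_one]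
  rw [plog_eq_pcomp]
  symm
  apply eq_of_deriv
  · rw [pcomp_derivativeFun hu0, derivativeFun_logS, hu', ← mul_assoc, hGeom, one_mul]
  · rw [constantCoeff_pcomp, hg0, ← coeff_zero_eq_constantCoeff]
    simp [logS]
end
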